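/- Let (x_n) and (y_n) be sequences in the right half-plane ℂ₀ with x_n = Re(w_n), y_n = Im(w_n), |y_n| → ∞, and x_n/|y_n| → 0 (tangential approach to ∞). Then the pseudo-hyperbolic distance from w_n = x_n + i y_n to the ray I = [1, ∞) ⊆ ℝ ⊆ ℂ₀ tends to 1; equivalently, for all δ > 0 there exists n₀ such that for all n ≥ n₀ and all x ≥ 1, |(w_n − x)/(w_n + x)|² ≥ 1 − δ. -/

import Mathlib

open Filter

theorem stmt15 (w : ℕ → ℂ) (hre : ∀ n, 0 < (w n).re)
    (him : Tendsto (fun n => |(w n).im|) atTop atTop)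
    (htan : Tendsto (fun n => (w n).re / |(w n).im|) atTop (nhds 0)) :
    ∀ δ : ℝ, 0 < δ → ∃ n₀ : ℕ, ∀ n ≥ n₀, ∀ x : ℝ, 1 ≤ x →
      1 - δ ≤ ‖(w n - (x : ℂ)) / (w n + (x : ℂ))‖ ^ 2 := by
  intro δ hδ
  have h1 : ∀ᶠ n in atTop, (w n).re / |(w n).im| < δ / 2 :=
    htan.eventually_lt_const (by linarith)
  have h2 : ∀ᶠ n in atTop, 1 ≤ |(w n).im| := him.eventually_ge_atTop 1
  obtain ⟨n₀, hn₀⟩ := (h1.and h2).exists_forall_of_atTop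
  refine ⟨n₀, fun n hn x hx => ?_⟩
  obtain ⟨ha, hb⟩ := hn₀ n hn
  set a := (w n).re with hadef
  set b := (w n).im with hbdef
  have hb0 : 0 < |b| := lt_of_lt_of_le one_pos hb
  have haδ : a < δ / 2 * |b| := (div_lt_iff₀ hb0).mp ha
  have ha0 : 0 < a := hre n
  have hx0 : 0 < x := lt_of_lt_of_le one_pos hx
  have key : ‖(w n - (x : ℂ)) / (w n + (x : ℂ))‖ ^ 2
      = ((a - x) ^ 2 + b ^ 2) / ((a + x) ^ 2 + b ^ 2) := by
    rw [norm_div, div_pow, Complex.sq_norm, Complex.sq_norm, Complex.normSq_apply,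
      Complex.normSq_apply]
    simp [Complex.sub_re, Complex.sub_im, Complex.add_re, Complex.add_im, ← hadef, ← hbdef]
    ring
  rw [key]
  have hD : 0 < (a + x) ^ 2 + b ^ 2 := by positivity
  rw [le_div_iff₀ hD]
  nlinarith [sq_abs b, mul_lt_mul_of_pos_right haδ hx0,
    mul_nonneg hδ.le (sq_nonneg (x - |b|)),
    mul_nonneg hδ.le (mul_pos ha0 hx0).le,
    mul_nonneg hδ.le (sq_nonneg a)]
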